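/- Let K > 0, 0 ≤ η̄ ≤ K, and suppose η : ℝ^d → ℝ^d satisfies the standing assumption of order 3 with bound η̄. Then there is a constant N depending only on K and d such that for every continuously differentiable φ : ℝ^d → ℝ with φ and its first-order partial derivatives Lebesgue integrable one has ∫_{ℝ^d} (φ(x+η(x)) − φ(x)) dx ≤ N η̄ ∫_{ℝ^d} |φ(x)| dx. -/

import Mathlib

open MeasureTheory Filter Finset
noncomputable section

/-- `ℝ^d` with the Euclidean norm. -/
abbrev Euc (d : ℕ) := EuclideanSpace ℝ (Fin d)

/-- The standing assumption of order `j` with bound `ηbar` on `η : ℝ^d → ℝ^d`. -/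
def StandingAssumption (d : ℕ) (K ηbar : ℝ) (j : ℕ) (η : Euc d → Euc d) : Prop :=
  ContDiff ℝ j η ∧
  (∀ l ≤ j, ∀ x, ‖iteratedFDeriv ℝ l η x‖ ≤ ηbar) ∧
  ∀ x : Euc d, ∀ θ ∈ Set.Icc (0:ℝ) 1,
    K⁻¹ ≤ |(ContinuousLinearMap.id ℝ (Euc d) + θ • fderiv ℝ η x).det|

namespace IetaAux

variable {d : ℕ}

lemma coord_le_norm (x : Euc d) (i : Fin d) : |x i| ≤ ‖x‖ := by
  rw [EuclideanSpace.norm_eq, ← Real.sqrt_sq_eq_abs]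
  apply Real.sqrt_le_sqrt
  have : |x i| ^ 2 ≤ ∑ j, ‖x j‖ ^ 2 := by
    have := Finset.single_le_sum (f := fun j => ‖x j‖ ^ 2) (fun j _ => by positivity)
      (Finset.mem_univ i)
    simpa [Real.norm_eq_abs, sq_abs] using this
  simpa [sq_abs] using this

/-- determinant as a continuous multilinear map in the rows. -/
def detCM (d : ℕ) : ContinuousMultilinearMap ℝ (fun _ : Fin d => (Fin d → ℝ)) ℝ :=
  MultilinearMap.mkContinuous
    (Matrix.detRowAlternating (n := Fin d) (R := ℝ)).toMultilinearMap (d.factorial : ℝ)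
    (by
      intro m
      have h1 : (Matrix.detRowAlternating (n := Fin d) (R := ℝ)).toMultilinearMap m
          = ∑ σ : Equiv.Perm (Fin d), Equiv.Perm.sign σ • ∏ i, m (σ i) i :=
        Matrix.det_apply (Matrix.of m)
      rw [h1, Real.norm_eq_abs]
      calc |∑ σ : Equiv.Perm (Fin d), Equiv.Perm.sign σ • ∏ i, m (σ i) i|
          ≤ ∑ σ : Equiv.Perm (Fin d), |Equiv.Perm.sign σ • ∏ i, m (σ i) i| :=
            Finset.abs_sum_le_sum_abs _ _
        _ ≤ ∑ _σ : Equiv.Perm (Fin d), ∏ i, ‖m i‖ := by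
            apply Finset.sum_le_sum
            intro σ _
            have habs : |Equiv.Perm.sign σ • ∏ i, m (σ i) i| = |∏ i, m (σ i) i| := by
              rcases Int.units_eq_one_or (Equiv.Perm.sign σ) with h | h <;>
                simp [h, abs_neg]
            rw [habs, Finset.abs_prod]
            calc ∏ i, |m (σ i) i| ≤ ∏ i, ‖m (σ i)‖ := by
                  apply Finset.prod_le_prod (fun i _ => abs_nonneg _)
                  intro i _
                  simpa [Real.norm_eq_abs] using norm_le_pi_norm (m (σ i)) i
              _ = ∏ i, ‖m i‖ := Equiv.prod_comp σ (fun i => ‖m i‖)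
        _ = (d.factorial : ℝ) * ∏ i, ‖m i‖ := by
            rw [Finset.sum_const, nsmul_eq_mul]
            congr 1
            simp [Fintype.card_perm]
      )

lemma detCM_norm_le (d : ℕ) : ‖detCM d‖ ≤ (d.factorial : ℝ) :=
  MultilinearMap.mkContinuous_norm_le _ (by positivity) _

lemma detCM_apply (d : ℕ) (m : Fin d → Fin d → ℝ) : detCM d m = (Matrix.of m).det := rfl

/-- the matrix of a continuous linear map on `Euc d`, as a plain function. -/
def matOf (B : Euc d →L[ℝ] Euc d) : Fin d → Fin d → ℝ :=
  fun i j => B (EuclideanSpace.single j 1) i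

lemma det_eq_detCM (B : Euc d →L[ℝ] Euc d) : B.det = detCM d (matOf B) := by
  rw [detCM_apply]
  have hb : (Matrix.of (matOf B)) =
      LinearMap.toMatrix (EuclideanSpace.basisFun (Fin d) ℝ).toBasis
        (EuclideanSpace.basisFun (Fin d) ℝ).toBasis (B : Euc d →ₗ[ℝ] Euc d) := by
    ext i j
    rw [LinearMap.toMatrix_apply]
    simp [matOf, EuclideanSpace.basisFun_apply]
  rw [hb, LinearMap.det_toMatrix]


lemma matOf_norm_le (B : Euc d →L[ℝ] Euc d) : ‖matOf B‖ ≤ ‖B‖ := by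
  rw [pi_norm_le_iff_of_nonneg (norm_nonneg B)]
  intro i
  rw [pi_norm_le_iff_of_nonneg (norm_nonneg B)]
  intro j
  rw [Real.norm_eq_abs]
  have h1 : ‖(EuclideanSpace.single j 1 : Euc d)‖ = 1 := by
    rw [EuclideanSpace.norm_single]; simp
  have h2 : ‖B (EuclideanSpace.single j 1)‖ ≤ ‖B‖ := by
    have h := B.le_opNorm (EuclideanSpace.single j 1)
    rwa [h1, mul_one] at h
  show |B (EuclideanSpace.single j 1) i| ≤ ‖B‖
  exact (coord_le_norm _ _).trans h2

lemma matOf_one : matOf (1 : Euc d →L[ℝ] Euc d) = fun i j => if i = j then (1:ℝ) else 0 := by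
  funext i j
  simp [matOf, EuclideanSpace.single_apply, eq_comm]

lemma matOf_one_norm_le : ‖matOf (1 : Euc d →L[ℝ] Euc d)‖ ≤ 1 := by
  rw [pi_norm_le_iff_of_nonneg zero_le_one]
  intro i
  rw [pi_norm_le_iff_of_nonneg zero_le_one]
  intro j
  rw [matOf_one, Real.norm_eq_abs]
  rcases eq_or_ne i j with h | h <;> simp [h]

lemma matOf_add (B C : Euc d →L[ℝ] Euc d) : matOf (B + C) = matOf B + matOf C := by
  funext i j
  simp [matOf]

/-- Lipschitz-type estimate for the determinant near the identity. -/
lemma abs_det_one_add_sub_one_le {K : ℝ} (hK : 0 ≤ K) (B : Euc d →L[ℝ] Euc d)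
    (hB : ‖B‖ ≤ K) :
    |(1 + B).det - 1| ≤ ((d.factorial : ℝ) * d * (1 + K) ^ (d - 1)) * ‖B‖ := by
  have h1 : (1 + B).det = detCM d (matOf (1 + B)) := det_eq_detCM _
  have h2 : (1 : ℝ) = detCM d (matOf (1 : Euc d →L[ℝ] Euc d)) := by
    rw [← det_eq_detCM]
    show (1:ℝ) = LinearMap.det ((1 : Euc d →L[ℝ] Euc d) : Euc d →ₗ[ℝ] Euc d)
    rw [ContinuousLinearMap.one_def, ContinuousLinearMap.coe_id, LinearMap.det_id]
  rw [h1]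
  nth_rewrite 1 [h2]
  have key := (detCM d).norm_image_sub_le (matOf (1 + B)) (matOf (1 : Euc d →L[ℝ] Euc d))
  rw [Real.norm_eq_abs] at key
  have hsub : matOf (1 + B) - matOf (1 : Euc d →L[ℝ] Euc d) = matOf B := by
    rw [matOf_add]; abel
  have hm1 : ‖matOf (1 + B)‖ ≤ 1 + K := by
    rw [matOf_add]
    calc ‖matOf (1 : Euc d →L[ℝ] Euc d) + matOf B‖
        ≤ ‖matOf (1 : Euc d →L[ℝ] Euc d)‖ + ‖matOf B‖ := norm_add_le _ _
      _ ≤ 1 + K := add_le_add matOf_one_norm_le ((matOf_norm_le B).trans hB)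
  have hmax : max ‖matOf (1 + B)‖ ‖matOf (1 : Euc d →L[ℝ] Euc d)‖ ≤ 1 + K :=
    max_le hm1 (matOf_one_norm_le.trans (by linarith))
  calc |detCM d (matOf (1 + B)) - detCM d (matOf (1 : Euc d →L[ℝ] Euc d))|
      ≤ ‖detCM d‖ * (Fintype.card (Fin d)) *
          max ‖matOf (1 + B)‖ ‖matOf (1 : Euc d →L[ℝ] Euc d)‖ ^ (Fintype.card (Fin d) - 1) *
          ‖matOf (1 + B) - matOf (1 : Euc d →L[ℝ] Euc d)‖ := key
    _ ≤ (d.factorial : ℝ) * d * (1 + K) ^ (d - 1) * ‖B‖ := by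
        rw [hsub, Fintype.card_fin]
        have h0 : (0:ℝ) ≤ max ‖matOf (1 + B)‖ ‖matOf (1 : Euc d →L[ℝ] Euc d)‖ :=
          le_max_of_le_left (norm_nonneg _)
        gcongr
        · exact detCM_norm_le d
        · exact matOf_norm_le B


lemma toEquiv {A : Euc d →L[ℝ] Euc d} (h : A.det ≠ 0) :
    ∃ e : Euc d ≃L[ℝ] Euc d, (e : Euc d →L[ℝ] Euc d) = A := by
  have hl : LinearMap.det (A : Euc d →ₗ[ℝ] Euc d) ≠ 0 := h
  refine ⟨(LinearMap.equivOfDetNeZero _ hl).toContinuousLinearEquiv, ?_⟩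
  ext x
  rfl

lemma exists_L (d : ℕ) (K : ℝ) (hK : 0 < K) :
    ∃ L : ℝ, 1 ≤ L ∧ ∀ A : Euc d →L[ℝ] Euc d, ‖A‖ ≤ K → K⁻¹ ≤ |(1 + A).det| →
      ∀ e : Euc d ≃L[ℝ] Euc d, (e : Euc d →L[ℝ] Euc d) = 1 + A →
        ‖(e.symm : Euc d →L[ℝ] Euc d)‖ ≤ L := by
  set S : Set (Euc d →L[ℝ] Euc d) := {A | ‖A‖ ≤ K ∧ K⁻¹ ≤ |(1 + A).det|} with hS
  have hdetcont : Continuous fun A : Euc d →L[ℝ] Euc d => |(1 + A).det| :=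
    (ContinuousLinearMap.continuous_det.comp (continuous_const.add continuous_id)).abs
  have hSc : IsCompact S := by
    apply Metric.isCompact_of_isClosed_isBounded
    · exact (isClosed_le continuous_norm continuous_const).inter
        (isClosed_le continuous_const hdetcont)
    · apply (Metric.isBounded_closedBall (x := (0 : Euc d →L[ℝ] Euc d)) (r := K)).subset
      intro A hA
      rw [Metric.mem_closedBall, dist_zero_right]
      exact hA.1
  have hunit : ∀ A ∈ S, IsUnit (1 + A) := by
    intro A hA
    have hne : (1 + A).det ≠ 0 := by
      intro h0
      have hA2 := hA.2
      rw [h0] at hA2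
      simp only [abs_zero] at hA2
      have := inv_pos.mpr hK
      linarith
    obtain ⟨e, he⟩ := toEquiv hne
    exact ⟨e.toUnit, by rw [← he]; rfl⟩
  have hcont : ContinuousOn (fun A : Euc d →L[ℝ] Euc d => ‖Ring.inverse (1 + A)‖) S := by
    intro A hA
    obtain ⟨u, hu⟩ := hunit A hA
    have h2 : ContinuousAt (Ring.inverse : (Euc d →L[ℝ] Euc d) → _) (1 + A) := by
      rw [← hu]; exact NormedRing.inverse_continuousAt u
    have h1 : ContinuousAt (fun B : Euc d →L[ℝ] Euc d => Ring.inverse (1 + B)) A :=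
      h2.comp ((continuous_const.add continuous_id).continuousAt)
    exact (h1.norm).continuousWithinAt
  obtain ⟨L₀, hL₀⟩ := (hSc.image_of_continuousOn hcont).bddAbove
  simp only [mem_upperBounds, Set.mem_image] at hL₀
  refine ⟨max L₀ 1, le_max_right _ _, ?_⟩
  intro A hA1 hA2 e he
  have hmem : A ∈ S := ⟨hA1, hA2⟩
  have key : Ring.inverse (1 + A) = (e.symm : Euc d →L[ℝ] Euc d) := by
    rw [← he]
    simp
  calc ‖(e.symm : Euc d →L[ℝ] Euc d)‖ = ‖Ring.inverse (1 + A)‖ := by rw [key]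
    _ ≤ L₀ := hL₀ _ ⟨A, hmem, rfl⟩
    _ ≤ max L₀ 1 := le_max_left _ _

lemma bij_id_add {u : Euc d → Euc d} {c : NNReal} (hc : (c : ℝ) < 1)
    (hu : LipschitzWith c u) : Function.Bijective (fun x => x + u x) := by
  constructor
  · intro x y hxy
    simp only at hxy
    have h1 : x - y = u y - u x := by
      rw [sub_eq_sub_iff_add_eq_add, hxy]; abel
    have h2 : ‖x - y‖ ≤ c * ‖x - y‖ := by
      calc ‖x - y‖ = ‖u y - u x‖ := by rw [h1]
        _ = dist (u y) (u x) := (dist_eq_norm _ _).symm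
        _ ≤ c * dist y x := hu.dist_le_mul y x
        _ = c * ‖x - y‖ := by rw [dist_eq_norm, norm_sub_rev]
    have h3 : ‖x - y‖ = 0 := by nlinarith [norm_nonneg (x - y)]
    have := norm_eq_zero.mp h3
    exact sub_eq_zero.mp this
  · intro z
    have hF : ContractingWith c (fun y => z - u y) := by
      refine ⟨hc, ?_⟩
      intro a b
      calc edist (z - u a) (z - u b) = edist (u a) (u b) := by
            rw [edist_sub_left]
        _ ≤ c * edist a b := hu a b
    obtain ⟨y, hy, -⟩ := hF.exists_fixedPoint z (edist_ne_top _ _)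
    refine ⟨y, ?_⟩
    have h3 : z - u y = y := hy
    show y + u y = z
    have h5 := congrArg (fun w => w + u y) h3
    simpa using h5.symm

lemma T_bijective
    {K L : ℝ} (hK : 0 < K) (hL : 1 ≤ L)
    (η : Euc d → Euc d) (hη : ContDiff ℝ 1 η)
    (hηK : ∀ x, ‖fderiv ℝ η x‖ ≤ K)
    (hdet : ∀ x : Euc d, ∀ θ ∈ Set.Icc (0:ℝ) 1,
      K⁻¹ ≤ |((1 : Euc d →L[ℝ] Euc d) + θ • fderiv ℝ η x).det|)
    (hLp : ∀ A : Euc d →L[ℝ] Euc d, ‖A‖ ≤ K → K⁻¹ ≤ |(1 + A).det| →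
      ∀ e : Euc d ≃L[ℝ] Euc d, (e : Euc d →L[ℝ] Euc d) = 1 + A →
        ‖(e.symm : Euc d →L[ℝ] Euc d)‖ ≤ L) :
    ∀ θ ∈ Set.Icc (0:ℝ) 1, Function.Bijective (fun x : Euc d => x + θ • η x) := by
  have hL0 : 0 < L := lt_of_lt_of_le one_pos hL
  set ε : ℝ := (2 * K * L)⁻¹ with hε
  have hεpos : 0 < ε := by positivity
  have hηdiff : Differentiable ℝ η := hη.differentiable one_ne_zero
  have hηlip : LipschitzWith K.toNNReal η := by
    apply lipschitzWith_of_nnnorm_fderiv_le hηdiff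
    intro x
    rw [← NNReal.coe_le_coe, coe_nnnorm, Real.coe_toNNReal _ hK.le]
    exact hηK x
  -- derivative facts
  have hTdiff : ∀ (θ : ℝ) (x : Euc d), HasFDerivAt (fun x : Euc d => x + θ • η x)
      ((1 : Euc d →L[ℝ] Euc d) + θ • fderiv ℝ η x) x := by
    intro θ x
    exact (hasFDerivAt_id x).add (((hηdiff x).hasFDerivAt).const_smul θ)
  have hTcd : ∀ θ : ℝ, ContDiff ℝ 1 (fun x : Euc d => x + θ • η x) :=
    fun θ => contDiff_id.add (hη.const_smul θ)
  have hTstrict : ∀ (θ : ℝ) (x : Euc d), HasStrictFDerivAt (fun x : Euc d => x + θ • η x)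
      ((1 : Euc d →L[ℝ] Euc d) + θ • fderiv ℝ η x) x := by
    intro θ x
    have h := (hTcd θ).hasStrictFDerivAt (x := x) one_ne_zero
    rwa [(hTdiff θ x).fderiv] at h
  -- the step lemma
  have step : ∀ θ ∈ Set.Icc (0:ℝ) 1, ∀ θ' ∈ Set.Icc (0:ℝ) 1, |θ' - θ| ≤ ε →
      Function.Bijective (fun x : Euc d => x + θ • η x) →
      Function.Bijective (fun x : Euc d => x + θ' • η x) := by
    intro θ hθ θ' hθ' hdist hbij
    have hA : ∀ x : Euc d, ‖θ • fderiv ℝ η x‖ ≤ K := by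
      intro x
      rw [norm_smul, Real.norm_eq_abs, abs_of_nonneg hθ.1]
      calc θ * ‖fderiv ℝ η x‖ ≤ 1 * ‖fderiv ℝ η x‖ :=
            mul_le_mul_of_nonneg_right hθ.2 (norm_nonneg _)
        _ = ‖fderiv ℝ η x‖ := one_mul _
        _ ≤ K := hηK x
    have hdet' : ∀ x : Euc d, K⁻¹ ≤ |((1 : Euc d →L[ℝ] Euc d) + θ • fderiv ℝ η x).det| :=
      fun x => hdet x θ hθ
    have hne : ∀ x : Euc d, ((1 : Euc d →L[ℝ] Euc d) + θ • fderiv ℝ η x).det ≠ 0 := by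
      intro x h0
      have h1 := hdet' x
      rw [h0, abs_zero] at h1
      have := inv_pos.mpr hK
      linarith
    choose e he using fun x : Euc d => toEquiv (hne x)
    set T : Euc d → Euc d := fun x => x + θ • η x with hT
    set g : Euc d → Euc d := Function.invFun T with hg
    have hgl : Function.LeftInverse g T := Function.leftInverse_invFun hbij.1
    have hgr : Function.RightInverse g T := Function.rightInverse_invFun hbij.2
    have hgd : ∀ y : Euc d, HasFDerivAt g ((e (g y)).symm : Euc d →L[ℝ] Euc d) y := by
      intro y
      have hs := hTstrict θ (g y)
      rw [← he (g y)] at hs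
      have h2 := hs.to_local_left_inverse (g := g)
        (Filter.Eventually.of_forall fun x => hgl x)
      rw [show g y + θ • η (g y) = y from hgr y] at h2
      exact h2.hasFDerivAt
    have hgdiff : Differentiable ℝ g := fun y => (hgd y).differentiableAt
    have hgnorm : ∀ y, ‖fderiv ℝ g y‖ ≤ L := by
      intro y
      rw [(hgd y).fderiv]
      exact hLp _ (hA _) (hdet' _) _ (he _)
    have hglip : LipschitzWith L.toNNReal g := by
      apply lipschitzWith_of_nnnorm_fderiv_le hgdiff
      intro y
      rw [← NNReal.coe_le_coe, coe_nnnorm, Real.coe_toNNReal _ hL0.le]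
      exact hgnorm y
    set u : Euc d → Euc d := fun y => (θ' - θ) • η (g y) with hu
    set c : NNReal := ‖θ' - θ‖₊ * (K.toNNReal * L.toNNReal) with hc
    have hulip : LipschitzWith c u := by
      have h1 : LipschitzWith (K.toNNReal * L.toNNReal) (fun y => η (g y)) :=
        hηlip.comp hglip
      exact (lipschitzWith_smul (θ' - θ)).comp h1
    have hcc : (c : ℝ) < 1 := by
      have h1 : (c : ℝ) = |θ' - θ| * (K * L) := by
        simp [hc, Real.coe_toNNReal _ hK.le, Real.coe_toNNReal _ hL0.le, Real.norm_eq_abs]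
      rw [h1]
      calc |θ' - θ| * (K * L) ≤ ε * (K * L) :=
            mul_le_mul_of_nonneg_right hdist (by positivity)
        _ = 2⁻¹ := by
            rw [hε]
            field_simp
        _ < 1 := by norm_num
    have hb2 := bij_id_add hcc hulip
    have hcomp : (fun x : Euc d => x + θ' • η x) = (fun y => y + u y) ∘ T := by
      funext x
      simp only [Function.comp, hu, hT]
      rw [hgl x]
      rw [sub_smul]
      abel
    rw [hcomp]
    exact hb2.comp hbij
  -- induction
  have main : ∀ n : ℕ, ∀ θ ∈ Set.Icc (0:ℝ) 1, θ ≤ n * ε →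
      Function.Bijective (fun x : Euc d => x + θ • η x) := by
    intro n
    induction n with
    | zero =>
      intro θ hθ hle
      have hθ0 : θ = 0 := le_antisymm (by simpa using hle) hθ.1
      subst hθ0
      have : (fun x : Euc d => x + (0:ℝ) • η x) = id := by
        funext x; simp
      rw [this]
      exact Function.bijective_id
    | succ n ih =>
      intro θ hθ hle
      by_cases h : θ ≤ n * ε
      · exact ih θ hθ h
      · push_neg at h
        set θ' : ℝ := max 0 (θ - ε) with hθ'def
        have hθ'le : θ' ≤ θ := max_le hθ.1 (by linarith)
        have hθ'mem : θ' ∈ Set.Icc (0:ℝ) 1 := ⟨le_max_left _ _, hθ'le.trans hθ.2⟩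
        have hθ'n : θ' ≤ n * ε := by
          apply max_le
          · positivity
          · push_cast at hle
            linarith
        have hdist2 : |θ - θ'| ≤ ε := by
          rw [abs_of_nonneg (by linarith)]
          have h4 : θ - ε ≤ θ' := le_max_right _ _
          linarith
        exact step θ' hθ'mem θ hθ hdist2 (ih θ' hθ'mem hθ'n)
  intro θ hθ
  obtain ⟨n, hn⟩ := exists_nat_ge (θ / ε)
  apply main n θ hθ
  rw [div_le_iff₀ hεpos] at hn
  exact hn
end IetaAux

open IetaAux in
/-- Estimate of `∫ I^η φ` by `N η̄ ∫ |φ|`. -/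
theorem integral_Iη_bound (d : ℕ) (K : ℝ) (hd : 1 ≤ d) (hK : 0 < K) :
    ∃ N : ℝ, 0 < N ∧
      ∀ (ηbar : ℝ) (η : Euc d → Euc d), 0 ≤ ηbar → ηbar ≤ K →
        StandingAssumption d K ηbar 3 η →
        ∀ φ : Euc d → ℝ, ContDiff ℝ 1 φ →
          (∀ l ≤ 1, Integrable (fun x => ‖iteratedFDeriv ℝ l φ x‖)) →
          (∫ x : Euc d, (φ (x + η x) - φ x))
            ≤ N * ηbar * ∫ x : Euc d, |φ x| := by
  classical
  obtain ⟨L, hL1, hLp⟩ := IetaAux.exists_L d K hK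
  set C : ℝ := (d.factorial : ℝ) * d * (1 + K) ^ (d - 1) with hC
  have hdpos : (0:ℝ) < d := by exact_mod_cast hd
  have hCpos : 0 < C := by
    have h1 : (0:ℝ) < (d.factorial : ℝ) := by exact_mod_cast d.factorial_pos
    positivity
  refine ⟨C * K, by positivity, ?_⟩
  rintro ηbar η hηb0 hηbK ⟨hη3, hbnd, hdet0⟩ φ hφ hint
  have hdet : ∀ x : Euc d, ∀ θ ∈ Set.Icc (0:ℝ) 1,
      K⁻¹ ≤ |((1 : Euc d →L[ℝ] Euc d) + θ • fderiv ℝ η x).det| := fun x θ hθ => hdet0 x θ hθ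
  have hη1 : ContDiff ℝ 1 η := hη3.of_le (by norm_num)
  have hηd : Differentiable ℝ η := hη1.differentiable one_ne_zero
  have hηD : ∀ x, ‖fderiv ℝ η x‖ ≤ ηbar := by
    intro x
    have h1 := hbnd 1 (by norm_num) x
    calc ‖fderiv ℝ η x‖ = ‖iteratedFDeriv ℝ 0 (fderiv ℝ η) x‖ :=
          (norm_iteratedFDeriv_zero).symm
      _ = ‖iteratedFDeriv ℝ 1 η x‖ := norm_iteratedFDeriv_fderiv
      _ ≤ ηbar := h1
  have hηK : ∀ x, ‖fderiv ℝ η x‖ ≤ K := fun x => (hηD x).trans hηbK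
  have hbij := IetaAux.T_bijective hK hL1 η hη1 hηK hdet hLp 1 (Set.mem_Icc.mpr ⟨zero_le_one, le_rfl⟩)
  set T : Euc d → Euc d := fun x => x + η x with hTdef
  have hTbij : Function.Bijective T := by
    have h : T = fun x => x + (1:ℝ) • η x := by funext x; rw [one_smul]
    rw [h]; exact hbij
  set A : Euc d → (Euc d →L[ℝ] Euc d) := fun x => (1 : Euc d →L[ℝ] Euc d) + fderiv ℝ η x
    with hA
  have hTd : ∀ x ∈ Set.univ, HasFDerivWithinAt T (A x) Set.univ x := by
    intro x _
    exact ((hasFDerivAt_id x).add ((hηd x).hasFDerivAt)).hasFDerivWithinAt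
  set J : Euc d → ℝ := fun x => |(A x).det| with hJ
  have hJlb : ∀ x, K⁻¹ ≤ J x := by
    intro x
    have h := hdet x 1 (Set.mem_Icc.mpr ⟨zero_le_one, le_rfl⟩)
    rwa [one_smul] at h
  have hKJ : ∀ x, (1:ℝ) ≤ K * J x := by
    intro x
    have h := mul_le_mul_of_nonneg_left (hJlb x) hK.le
    rwa [mul_inv_cancel₀ hK.ne'] at h
  have hJsub : ∀ x, |1 - J x| ≤ C * ηbar := by
    intro x
    have h1 : |1 - J x| ≤ |(A x).det - 1| := by
      rw [abs_sub_comm]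
      have h0 := abs_abs_sub_abs_le_abs_sub ((A x).det) (1:ℝ)
      simpa using h0
    have h2 := IetaAux.abs_det_one_add_sub_one_le hK.le (fderiv ℝ η x) (hηK x)
    calc |1 - J x| ≤ C * ‖fderiv ℝ η x‖ := h1.trans h2
      _ ≤ C * ηbar := mul_le_mul_of_nonneg_left (hηD x) hCpos.le
  have hCOV : ∀ g : Euc d → ℝ, ∫ y, g y = ∫ x, J x • g (T x) := by
    intro g
    have h := integral_image_eq_integral_abs_det_fderiv_smul volume MeasurableSet.univ hTd
      hTbij.1.injOn g
    rwa [Set.image_univ, hTbij.2.range_eq, setIntegral_univ, setIntegral_univ] at h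
  have hIFF : ∀ g : Euc d → ℝ, Integrable g ↔ Integrable (fun x => J x • g (T x)) := by
    intro g
    have h := integrableOn_image_iff_integrableOn_abs_det_fderiv_smul volume
      MeasurableSet.univ hTd hTbij.1.injOn g
    rwa [Set.image_univ, hTbij.2.range_eq, integrableOn_univ, integrableOn_univ] at h
  have hφc : Continuous φ := hφ.continuous
  have hφint : Integrable φ := by
    have h := hint 0 (by norm_num)
    refine h.mono' hφc.aestronglyMeasurable (Filter.Eventually.of_forall fun x => ?_)
    rw [norm_iteratedFDeriv_zero]
  have habs : Integrable (fun x => |φ x|) := hφint.abs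
  have hJφT : Integrable (fun x => J x • φ (T x)) := (hIFF φ).mp hφint
  have hJaT : Integrable (fun x => J x • |φ (T x)|) := (hIFF (fun y => |φ y|)).mp habs
  have hTcont : Continuous T := continuous_id.add hη1.continuous
  have hφT : Integrable (fun x => φ (T x)) := by
    refine (hJaT.const_mul K).mono' ((hφc.comp hTcont).aestronglyMeasurable)
      (Filter.Eventually.of_forall fun x => ?_)
    simp only [Real.norm_eq_abs, smul_eq_mul]
    nlinarith [abs_nonneg (φ (T x)), hKJ x]
  have haT : Integrable (fun x => |φ (T x)|) := hφT.abs
  have e1 : ∫ x, (φ (T x) - φ x) = ∫ x, (φ (T x) - J x • φ (T x)) := by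
    rw [integral_sub hφT hφint, integral_sub hφT hJφT, hCOV φ]
  have e2 : ∫ x, (φ (T x) - J x • φ (T x)) ≤ ∫ x, (C * ηbar) * |φ (T x)| := by
    refine integral_mono (hφT.sub hJφT) (haT.const_mul _) (fun x => ?_)
    simp only [smul_eq_mul]
    calc φ (T x) - J x * φ (T x) = (1 - J x) * φ (T x) := by ring
      _ ≤ |(1 - J x) * φ (T x)| := le_abs_self _
      _ = |1 - J x| * |φ (T x)| := abs_mul _ _
      _ ≤ (C * ηbar) * |φ (T x)| := mul_le_mul_of_nonneg_right (hJsub x) (abs_nonneg _)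
  have e3 : ∫ x, |φ (T x)| ≤ K * ∫ y, |φ y| := by
    have h1 : ∫ x, |φ (T x)| ≤ ∫ x, K * (J x • |φ (T x)|) := by
      refine integral_mono haT ((hJaT.const_mul K)) (fun x => ?_)
      simp only [smul_eq_mul]
      nlinarith [abs_nonneg (φ (T x)), hKJ x]
    rw [integral_const_mul] at h1
    rw [hCOV (fun y => |φ y|)]
    exact h1
  calc ∫ x, (φ (x + η x) - φ x) = ∫ x, (φ (T x) - J x • φ (T x)) := e1
    _ ≤ ∫ x, (C * ηbar) * |φ (T x)| := e2
    _ = (C * ηbar) * ∫ x, |φ (T x)| := integral_const_mul _ _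
    _ ≤ (C * ηbar) * (K * ∫ y, |φ y|) := by
        apply mul_le_mul_of_nonneg_left e3 (by positivity)
    _ = (C * K) * ηbar * ∫ x, |φ x| := by ring
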